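/- Let J₀ and J₁ be nonempty finite types, J = J₀ ⊕ J₁, and let ρ : Matrix (Fin 2 × J) (Fin 2 × J) ℂ be positive semidefinite with trace 1, satisfying the sector support condition: ρ ((k,σ),(l,τ)) = 0 unless σ lies in the J_k-component of J and τ lies in the J_l-component of J. Define the partial transpose ρ̃ over the first factor by ρ̃ ((k,σ),(l,τ)) = ρ ((l,σ),(k,τ)). Then ρ̃ is positive semidefinite if and only if ρ ((0,σ),(1,τ)) = 0 for all σ, τ ∈ J. -/

import Mathlib

open scoped BigOperators ComplexOrder

/-- `σ : J₀ ⊕ J₁` lies in the `J_k`-component, for `k : Fin 2`. -/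
def inSector {J₀ J₁ : Type*} (k : Fin 2) (σ : J₀ ⊕ J₁) : Prop :=
  match σ with
  | .inl _ => k = 0
  | .inr _ => k = 1

lemma psd_row_zero {n : Type*} [Fintype n] {M : Matrix n n ℂ} (h : M.PosSemidef)
    (a b : n) (ha : M a a = 0) : M a b = 0 := by
  obtain ⟨B, rfl⟩ : ∃ B : Matrix n n ℂ, M = B.conjTranspose * B := by
    classical
    open MatrixOrder Matrix.Norms.L2Operator in
    exact CStarAlgebra.nonneg_iff_eq_star_mul_self.mp h.nonneg
  have hcol : ∀ i, B i a = 0 := by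
    have : ∑ i, Complex.normSq (B i a) = 0 := by
      have := ha
      simp only [Matrix.mul_apply, Matrix.conjTranspose_apply] at this
      have h2 : (∑ i, (starRingEnd ℂ) (B i a) * B i a)
          = ((∑ i, Complex.normSq (B i a) : ℝ) : ℂ) := by
        push_cast
        exact Finset.sum_congr rfl fun i _ => (Complex.normSq_eq_conj_mul_self).symm
      simp only [starRingEnd_apply] at h2
      rw [this] at h2
      exact_mod_cast h2.symm
    intro i
    have hnn : ∀ i ∈ Finset.univ, (0:ℝ) ≤ Complex.normSq (B i a) := fun i _ =>
      Complex.normSq_nonneg _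
    have := (Finset.sum_eq_zero_iff_of_nonneg hnn).mp this i (Finset.mem_univ i)
    exact Complex.normSq_eq_zero.mp this
  simp [Matrix.mul_apply, Matrix.conjTranspose_apply, hcol]

/-- for a state with respect to the bipartition into one mode and the
rest, the partial transposition criterion is exhaustive: the partial transpose over
the first factor is positive semidefinite if and only if all off-diagonal components
between the two sectors vanish. -/
theorem one_mode_partial_transpose_criterion
    {J₀ J₁ : Type*} [Fintype J₀] [Nonempty J₀] [Fintype J₁] [Nonempty J₁]
    (ρ : Matrix (Fin 2 × (J₀ ⊕ J₁)) (Fin 2 × (J₀ ⊕ J₁)) ℂ)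
    (hpsd : ρ.PosSemidef) (htr : ρ.trace = 1)
    (hsupp : ∀ (k l : Fin 2) (σ τ : J₀ ⊕ J₁),
      ρ (k, σ) (l, τ) ≠ 0 → inSector k σ ∧ inSector l τ) :
    (Matrix.of fun a b : Fin 2 × (J₀ ⊕ J₁) => ρ (b.1, a.2) (a.1, b.2)).PosSemidef
      ↔ (∀ σ τ : J₀ ⊕ J₁, ρ (0, σ) (1, τ) = 0) := by
  constructor
  · intro hpt σ τ
    match σ, τ with
    | .inr σ₁, τ =>
      by_contra hne
      have := (hsupp 0 1 (.inr σ₁) τ hne).1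
      simp [inSector] at this
    | .inl σ₀, .inl τ₀ =>
      by_contra hne
      have := (hsupp 0 1 (.inl σ₀) (.inl τ₀) hne).2
      simp [inSector] at this
    | .inl σ₀, .inr τ₁ =>
      have hdiag : ρ (1, Sum.inl σ₀) (1, Sum.inl σ₀) = 0 := by
        by_contra hne
        have := (hsupp 1 1 (.inl σ₀) (.inl σ₀) hne).1
        simp [inSector] at this
      have := psd_row_zero hpt (1, Sum.inl σ₀) (0, Sum.inr τ₁) hdiag
      simpa using this
  · intro hz
    have herm := hpsd.1
    have hz' : ∀ σ τ : J₀ ⊕ J₁, ρ (1, σ) (0, τ) = 0 := by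
      intro σ τ
      have := congrFun (congrFun herm (0, τ)) (1, σ)
      simp only [Matrix.conjTranspose_apply, Matrix.transpose_apply] at this
      rw [hz τ σ] at this
      exact star_eq_zero.mp this
    have heq : (Matrix.of fun a b : Fin 2 × (J₀ ⊕ J₁) => ρ (b.1, a.2) (a.1, b.2)) = ρ := by
      ext ⟨k, σ⟩ ⟨l, τ⟩
      fin_cases k <;> fin_cases l <;>
        simp [Matrix.of_apply, hz, hz']
    rw [heq]
    exact hpsd
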